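/- Assume the bidder values are μ-almost surely nonnegative and integrable. If the revenue curve rev is L-Lipschitz on [0, ∞), then the welfare curve W is Lipschitz continuous on [0, ∞). -/

import Mathlib

open MeasureTheory Filter

/-- Number of bidders with value at least `q`. -/
noncomputable def demandCount (n : ℕ) (q : ℝ) (v : Fin n → ℝ) : ℕ :=
  (Finset.univ.filter fun i => q ≤ v i).card

/-- Demand curve with limited supply `m`: expected value of `min(m, N(q,v))`. -/
noncomputable def mde (n m : ℕ) (μ : Measure ℝ) (q : ℝ) : ℝ :=
  ∫ v, ((min m (demandCount n q v) : ℕ) : ℝ) ∂(Measure.pi fun _ : Fin n => μ)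

/-- Revenue curve: `rev(q) = q · mde(q)`. -/
noncomputable def rev (n m : ℕ) (μ : Measure ℝ) (q : ℝ) : ℝ :=
  q * mde n m μ q

/-- Welfare of the maximum-value allocation at price `q` for value profile `v`:
the largest sum `Σ_{i∈S} vᵢ·1{vᵢ ≥ q}` over subsets `S` of size at most `m`. -/
noncomputable def maxWelfare (n m : ℕ) (q : ℝ) (v : Fin n → ℝ) : ℝ :=
  ((Finset.univ : Finset (Fin n)).powerset.filter fun S => S.card ≤ m).sup'
    ⟨∅, by simp⟩ fun S => ∑ i ∈ S, if q ≤ v i then v i else 0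

/-- Welfare curve: expected welfare of the maximum-value allocation at price `q`. -/
noncomputable def W (n m : ℕ) (μ : Measure ℝ) (q : ℝ) : ℝ :=
  ∫ v, maxWelfare n m q v ∂(Measure.pi fun _ : Fin n => μ)

section Aux

variable {n m : ℕ}

lemma mem_P {S : Finset (Fin n)} (h : S.card ≤ m) :
    S ∈ ((Finset.univ : Finset (Fin n)).powerset.filter fun S => S.card ≤ m) := by
  simp [Finset.mem_filter, Finset.mem_powerset, h]

lemma sum_le_maxWelfare {q : ℝ} {v : Fin n → ℝ} {S : Finset (Fin n)}
    (hS : S ⊆ Finset.univ.filter fun i => q ≤ v i) (hcard : S.card ≤ m) :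
    ∑ i ∈ S, v i ≤ maxWelfare n m q v := by
  have h := Finset.le_sup' (f := fun S => ∑ i ∈ S, if q ≤ v i then v i else 0) (mem_P hcard)
  refine le_trans (le_of_eq ?_) h
  apply Finset.sum_congr rfl
  intro i hi
  have : q ≤ v i := (Finset.mem_filter.mp (hS hi)).2
  simp [this]

lemma maxWelfare_exists (q : ℝ) (hq : 0 ≤ q) (v : Fin n → ℝ) :
    ∃ S : Finset (Fin n), S ⊆ (Finset.univ.filter fun i => q ≤ v i) ∧
      S.card = min m (demandCount n q v) ∧ maxWelfare n m q v = ∑ i ∈ S, v i := by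
  obtain ⟨S₀, hS₀P, hsup⟩ :=
    Finset.exists_mem_eq_sup' (⟨∅, by simp⟩ :
      ((Finset.univ : Finset (Fin n)).powerset.filter fun S => S.card ≤ m).Nonempty)
      (fun S => ∑ i ∈ S, if q ≤ v i then v i else 0)
  have hS₀m : S₀.card ≤ m := (Finset.mem_filter.mp hS₀P).2
  set S₁ := S₀.filter fun i => q ≤ v i with hS₁def
  have h1 : maxWelfare n m q v = ∑ i ∈ S₁, v i := by
    rw [maxWelfare, hsup, hS₁def, Finset.sum_filter]
  have hS₁F : S₁ ⊆ Finset.univ.filter fun i => q ≤ v i :=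
    Finset.monotone_filter_left _ (Finset.subset_univ S₀)
  have hcard : S₁.card ≤ min m (demandCount n q v) := by
    refine le_min (le_trans (Finset.card_filter_le _ _) hS₀m) (Finset.card_le_card hS₁F)
  obtain ⟨S, hS₁S, hSF, hScard⟩ :=
    Finset.exists_subsuperset_card_eq hS₁F hcard (min_le_right _ _)
  refine ⟨S, hSF, hScard, le_antisymm ?_ ?_⟩
  · rw [h1]
    refine Finset.sum_le_sum_of_subset_of_nonneg hS₁S fun i hi _ => ?_
    exact hq.trans (Finset.mem_filter.mp (hSF hi)).2
  · exact sum_le_maxWelfare hSF (hScard ▸ min_le_left _ _)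

lemma demandCount_anti {x y : ℝ} (hxy : x ≤ y) (v : Fin n → ℝ) :
    demandCount n y v ≤ demandCount n x v := by
  apply Finset.card_le_card
  intro i hi
  simp only [Finset.mem_filter, Finset.mem_univ, true_and] at *
  exact hxy.trans hi

lemma maxWelfare_anti {x y : ℝ} (hx : 0 ≤ x) (hxy : x ≤ y) (v : Fin n → ℝ) :
    maxWelfare n m y v ≤ maxWelfare n m x v := by
  apply Finset.sup'_le
  intro S hS
  refine le_trans ?_ (Finset.le_sup' (f := fun S => ∑ i ∈ S, if x ≤ v i then v i else 0) hS)
  apply Finset.sum_le_sum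
  intro i _
  by_cases h : y ≤ v i
  · simp [h, hxy.trans h]
  · simp only [h, if_false]
    split_ifs with h2
    · linarith
    · exact le_refl 0

lemma maxWelfare_nonneg (q : ℝ) (v : Fin n → ℝ) : 0 ≤ maxWelfare n m q v := by
  have h := Finset.le_sup' (f := fun S => ∑ i ∈ S, if q ≤ v i then v i else 0)
    (mem_P (m := m) (S := (∅ : Finset (Fin n))) (by simp))
  exact le_trans (by simp) h

lemma maxWelfare_sub_le {x y : ℝ} (hx : 0 ≤ x) (hxy : x ≤ y) (v : Fin n → ℝ) :
    maxWelfare n m x v ≤ maxWelfare n m y v +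
      y * (((min m (demandCount n x v) : ℕ) : ℝ) - ((min m (demandCount n y v) : ℕ) : ℝ)) := by
  obtain ⟨S, hSF, hScard, hSval⟩ := maxWelfare_exists (m := m) x hx v
  set Fy := Finset.univ.filter fun i => y ≤ v i with hFy
  set S₁ := S.filter fun i => y ≤ v i with hS₁def
  set S₂ := S.filter fun i => ¬ y ≤ v i with hS₂def
  set k := min m (demandCount n y v) with hk
  have hS₁Fy : S₁ ⊆ Fy := by
    intro i hi
    simp only [hS₁def, hFy, Finset.mem_filter, Finset.mem_univ, true_and] at *
    exact hi.2
  have hky : k ≤ Fy.card := min_le_right _ _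
  have hsplit : ∑ i ∈ S₁, v i + ∑ i ∈ S₂, v i = ∑ i ∈ S, v i :=
    Finset.sum_filter_add_sum_filter_not S _ v
  have hcardsplit : S₁.card + S₂.card = S.card :=
    Finset.card_filter_add_card_filter_not _
  have hS₂le : ∑ i ∈ S₂, v i ≤ (S₂.card : ℝ) * y := by
    have := Finset.sum_le_card_nsmul S₂ v y (fun i hi => by
      have := (Finset.mem_filter.mp hi).2
      linarith [not_le.mp this])
    simpa [nsmul_eq_mul] using this
  have hS₁m : S₁.card ≤ m := le_trans (Finset.card_filter_le _ _)
    (hScard ▸ min_le_left _ _)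
  by_cases h : k ≤ S₁.card
  · have h1 : ∑ i ∈ S₁, v i ≤ maxWelfare n m y v := sum_le_maxWelfare hS₁Fy hS₁m
    have h2 : (S₂.card : ℝ) ≤ ((min m (demandCount n x v) : ℕ) : ℝ) - (k : ℝ) := by
      have : S₂.card ≤ S.card - k := by omega
      have hks : k ≤ S.card := le_trans h (by omega)
      have := (Nat.cast_le (α := ℝ)).mpr this
      rw [Nat.cast_sub hks] at this
      rw [← hScard]
      exact this
    have hy : (0:ℝ) ≤ y := hx.trans hxy
    nlinarith [hsplit, hS₂le, h1, h2]
  · push_neg at h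
    obtain ⟨T, hS₁T, hTFy, hTcard⟩ :=
      Finset.exists_subsuperset_card_eq hS₁Fy h.le hky
    have hTm : T.card ≤ m := hTcard ▸ min_le_left _ _
    have h1 : ∑ i ∈ T, v i ≤ maxWelfare n m y v := sum_le_maxWelfare hTFy hTm
    have hTsplit : ∑ i ∈ T \ S₁, v i = ∑ i ∈ T, v i - ∑ i ∈ S₁, v i :=
      Finset.sum_sdiff_eq_sub hS₁T
    have hTS₁card : (T \ S₁).card = k - S₁.card := by
      rw [Finset.card_sdiff_of_subset hS₁T, hTcard]
    have hlow : (↑(k - S₁.card) : ℝ) * y ≤ ∑ i ∈ T \ S₁, v i := by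
      have := Finset.card_nsmul_le_sum (T \ S₁) v y (fun i hi => by
        have hiT : i ∈ Fy := hTFy (Finset.mem_sdiff.mp hi).1
        exact (Finset.mem_filter.mp hiT).2)
      rw [hTS₁card] at this
      simpa [nsmul_eq_mul] using this
    have hy : (0:ℝ) ≤ y := hx.trans hxy
    have hc1 : (↑(k - S₁.card) : ℝ) = (k : ℝ) - S₁.card := by
      rw [Nat.cast_sub h.le]
    have hc2 : (S₂.card : ℝ) = (S.card : ℝ) - S₁.card := by
      have := hcardsplit
      push_cast [← this]
      ring
    have hc3 : (S.card : ℝ) = ((min m (demandCount n x v) : ℕ) : ℝ) := by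
      exact_mod_cast congrArg (Nat.cast : ℕ → ℝ) hScard
    nlinarith [hsplit, hS₂le, h1, hTsplit, hlow]

variable (μ : Measure ℝ) [IsProbabilityMeasure μ]

lemma measurable_demand (q : ℝ) :
    Measurable fun v : Fin n → ℝ => ((min m (demandCount n q v) : ℕ) : ℝ) := by
  have h : Measurable fun v : Fin n → ℝ => demandCount n q v := by
    unfold demandCount
    simp_rw [Finset.card_filter]
    exact Finset.measurable_sum _ fun i _ =>
      Measurable.ite (measurableSet_le measurable_const (measurable_pi_apply i))
        measurable_const measurable_const
  exact measurable_from_top.comp (measurable_const.min h)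

lemma measurable_maxWelfare (q : ℝ) : Measurable (maxWelfare n m q) := by
  have : maxWelfare n m q =
      ((Finset.univ : Finset (Fin n)).powerset.filter fun S => S.card ≤ m).sup'
        ⟨∅, by simp⟩ (fun S v => ∑ i ∈ S, if q ≤ v i then v i else 0) := by
    funext v
    exact (Finset.sup'_apply (C := fun _ : Fin n → ℝ => ℝ) _
      (fun S (v : Fin n → ℝ) => ∑ i ∈ S, if q ≤ v i then v i else 0) v).symm
  rw [this]
  refine Finset.measurable_sup' _ fun S _ => ?_
  exact Finset.measurable_sum _ fun i _ =>
    Measurable.ite (measurableSet_le measurable_const (measurable_pi_apply i))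
      (measurable_pi_apply i) measurable_const

lemma map_eval (i : Fin n) :
    (Measure.pi fun _ : Fin n => μ).map (Function.eval i) = μ := by
  ext s hs
  rw [Measure.map_apply (measurable_pi_apply i) hs]
  have : Function.eval i ⁻¹' s =
      Set.pi Set.univ (Function.update (fun _ : Fin n => (Set.univ : Set ℝ)) i s) := by
    rw [Set.univ_pi_update_univ]
  rw [this, Measure.pi_pi]
  rw [show (fun i_1 => μ (Function.update (fun _ : Fin n => (Set.univ : Set ℝ)) i s i_1))
      = Function.update (fun _ : Fin n => μ Set.univ) i (μ s) from ?_]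
  · rw [Finset.prod_update_of_mem (Finset.mem_univ i)]
    simp
  · ext j
    rcases eq_or_ne j i with rfl | hj
    · simp
    · simp [Function.update_of_ne hj]

lemma integrable_coord (hint : Integrable (id : ℝ → ℝ) μ) (i : Fin n) :
    Integrable (fun v : Fin n → ℝ => v i) (Measure.pi fun _ : Fin n => μ) := by
  have h2 : Integrable (id : ℝ → ℝ)
      ((Measure.pi fun _ : Fin n => μ).map (Function.eval i)) := by
    rw [map_eval]; exact hint
  exact (integrable_map_measure h2.aestronglyMeasurable
    (measurable_pi_apply i).aemeasurable).mp h2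

lemma integrable_demand (q : ℝ) :
    Integrable (fun v : Fin n → ℝ => ((min m (demandCount n q v) : ℕ) : ℝ))
      (Measure.pi fun _ : Fin n => μ) := by
  refine ⟨(measurable_demand q).aestronglyMeasurable,
    HasFiniteIntegral.of_bounded (C := (m : ℝ)) (ae_of_all _ fun v => ?_)⟩
  rw [Real.norm_eq_abs, abs_of_nonneg (by positivity)]
  exact_mod_cast min_le_left m _

lemma integrable_maxWelfare (hint : Integrable (id : ℝ → ℝ) μ) (q : ℝ) :
    Integrable (maxWelfare n m q) (Measure.pi fun _ : Fin n => μ) := by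
  have hg : Integrable (fun v : Fin n → ℝ => ∑ i, |v i|)
      (Measure.pi fun _ : Fin n => μ) :=
    integrable_finset_sum _ fun i _ => (integrable_coord μ hint i).abs
  refine hg.mono (measurable_maxWelfare q).aestronglyMeasurable (ae_of_all _ fun v => ?_)
  rw [Real.norm_eq_abs, abs_of_nonneg (maxWelfare_nonneg q v)]
  rw [Real.norm_eq_abs, abs_of_nonneg (Finset.sum_nonneg fun i _ => abs_nonneg _)]
  apply Finset.sup'_le
  intro S _
  calc (∑ i ∈ S, if q ≤ v i then v i else 0) ≤ ∑ i ∈ S, |v i| := by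
        refine Finset.sum_le_sum fun i _ => ?_
        split_ifs
        · exact le_abs_self _
        · exact abs_nonneg _
    _ ≤ ∑ i, |v i| := Finset.sum_le_sum_of_subset_of_nonneg (Finset.subset_univ S)
        fun i _ _ => abs_nonneg _

lemma mde_le (q : ℝ) : mde n m μ q ≤ m := by
  rw [mde]
  calc ∫ v, ((min m (demandCount n q v) : ℕ) : ℝ) ∂(Measure.pi fun _ : Fin n => μ)
      ≤ ∫ _, (m : ℝ) ∂(Measure.pi fun _ : Fin n => μ) := by
        refine integral_mono (integrable_demand μ q) (integrable_const _) fun v => ?_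
        exact Nat.cast_le.mpr (min_le_left _ _)
    _ = m := by simp

end Aux

/-- If the revenue curve is `L`-Lipschitz on `[0, ∞)`, then the welfare curve is
Lipschitz continuous on `[0, ∞)`. -/
theorem welfare_curve_lipschitz
    (n m : ℕ) (hm : 1 ≤ m) (μ : Measure ℝ) [IsProbabilityMeasure μ]
    (hpos : ∀ᵐ x ∂μ, 0 ≤ x) (hint : Integrable (id : ℝ → ℝ) μ)
    (L : ℝ) (hL : 0 ≤ L)
    (hlip : ∀ x ∈ Set.Ici (0 : ℝ), ∀ y ∈ Set.Ici (0 : ℝ),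
      |rev n m μ x - rev n m μ y| ≤ L * |x - y|) :
    ∃ K : ℝ, 0 ≤ K ∧ ∀ x ∈ Set.Ici (0 : ℝ), ∀ y ∈ Set.Ici (0 : ℝ),
      |W n m μ x - W n m μ y| ≤ K * |x - y| := by
  refine ⟨L + m, by positivity, ?_⟩
  -- main inequality for ordered pairs
  have key : ∀ x ∈ Set.Ici (0 : ℝ), ∀ y ∈ Set.Ici (0 : ℝ), x ≤ y →
      |W n m μ x - W n m μ y| ≤ (L + m) * |x - y| := by
    intro x hx y hy hxy
    have hx0 : (0:ℝ) ≤ x := hx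
    have hy0 : (0:ℝ) ≤ y := hy
    -- W y ≤ W x
    have hWle : W n m μ y ≤ W n m μ x := by
      refine integral_mono (integrable_maxWelfare μ hint y) (integrable_maxWelfare μ hint x)
        fun v => maxWelfare_anti hx0 hxy v
    -- W x ≤ W y + y * (mde x - mde y)
    have hWup : W n m μ x ≤ W n m μ y + y * (mde n m μ x - mde n m μ y) := by
      have hptwise : ∀ v, maxWelfare n m x v ≤ maxWelfare n m y v +
          y * (((min m (demandCount n x v) : ℕ) : ℝ) - ((min m (demandCount n y v) : ℕ) : ℝ)) :=
        fun v => maxWelfare_sub_le hx0 hxy v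
      have haux : Integrable (fun v : Fin n → ℝ =>
          y * (((min m (demandCount n x v) : ℕ) : ℝ) - ((min m (demandCount n y v) : ℕ) : ℝ)))
          (Measure.pi fun _ : Fin n => μ) := by
        have := (((integrable_demand (n := n) (m := m) μ x).sub (integrable_demand (n := n) (m := m) μ y)).const_mul y)
        simpa using this
      have h1 : W n m μ x ≤ ∫ v, (maxWelfare n m y v +
          y * (((min m (demandCount n x v) : ℕ) : ℝ) - ((min m (demandCount n y v) : ℕ) : ℝ)))
          ∂(Measure.pi fun _ : Fin n => μ) := by
        refine integral_mono (integrable_maxWelfare μ hint x) ?_ hptwise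
        exact (integrable_maxWelfare μ hint y).add haux
      rw [integral_add (integrable_maxWelfare μ hint y) haux,
        integral_const_mul,
        integral_sub (integrable_demand μ x) (integrable_demand μ y)] at h1
      exact h1
    -- translate to rev
    have hrev : y * (mde n m μ x - mde n m μ y)
        = (y - x) * mde n m μ x + (rev n m μ x - rev n m μ y) := by
      simp only [rev]; ring
    have hmdex : mde n m μ x ≤ m := mde_le μ x
    have hrevlip : rev n m μ x - rev n m μ y ≤ L * (y - x) := by
      have habs : |x - y| = y - x := by
        rw [abs_sub_comm]; exact abs_of_nonneg (by linarith)
      calc rev n m μ x - rev n m μ y ≤ |rev n m μ x - rev n m μ y| := le_abs_self _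
        _ ≤ L * |x - y| := hlip x hx y hy
        _ = L * (y - x) := by rw [habs]
    have hdiff : W n m μ x - W n m μ y ≤ (L + m) * (y - x) := by
      have h2 : (y - x) * mde n m μ x ≤ (y - x) * m :=
        mul_le_mul_of_nonneg_left hmdex (by linarith)
      calc W n m μ x - W n m μ y ≤ y * (mde n m μ x - mde n m μ y) := by linarith
        _ = (y - x) * mde n m μ x + (rev n m μ x - rev n m μ y) := hrev
        _ ≤ (y - x) * m + L * (y - x) := by linarith
        _ = (L + m) * (y - x) := by ring
    rw [abs_of_nonneg (by linarith), abs_sub_comm, abs_of_nonneg (by linarith)]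
    linarith
  intro x hx y hy
  rcases le_total x y with h | h
  · exact key x hx y hy h
  · rw [abs_sub_comm, abs_sub_comm x y]
    exact key y hy x hx h
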